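/- Let u, v, A, M, S, c_a, c_w be real numbers with S ≠ A, and let 𝒟 be the 4×4 real matrix with rows (0, 1, 0, 0), (c_a²−v², 2v, (M/(S−A))c_a², 0), (0, 0, 0, 1), ((A/(S−A))c_a², 0, c_w² + (AM/(S−A)²)c_a² − u², 2u). Then for every λ ∈ ℝ, det(λ·I₄ − 𝒟) = (λ² − 2vλ − (c_a² − v²))·(λ² − 2uλ − (c_w² + (AM/(S−A)²)c_a² − u²)) − (AM/(S−A)²)·c_a⁴. In particular λ is an eigenvalue of 𝒟 if and only if (λ² − 2vλ − (c_a² − v²))·(λ² − 2uλ − (c_w² + (AM/(S−A)²)c_a² − u²)) = (AM/(S−A)²)·c_a⁴. -/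

import Mathlib

open Matrix

/-- characteristic polynomial of the convection matrix of the
two-layer model, and the corresponding characterization of its (real)
eigenvalues. -/
theorem convection_matrix_charpoly
    (u v A M S ca cw : ℝ) (hSA : S ≠ A)
    (𝒟 : Matrix (Fin 4) (Fin 4) ℝ)
    (h𝒟 : 𝒟 = !![0, 1, 0, 0;
                  ca ^ 2 - v ^ 2, 2 * v, (M / (S - A)) * ca ^ 2, 0;
                  0, 0, 0, 1;
                  (A / (S - A)) * ca ^ 2, 0,
                    cw ^ 2 + (A * M / (S - A) ^ 2) * ca ^ 2 - u ^ 2, 2 * u]) :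
    ∀ l : ℝ,
      (l • (1 : Matrix (Fin 4) (Fin 4) ℝ) - 𝒟).det
        = (l ^ 2 - 2 * v * l - (ca ^ 2 - v ^ 2))
            * (l ^ 2 - 2 * u * l - (cw ^ 2 + (A * M / (S - A) ^ 2) * ca ^ 2 - u ^ 2))
          - (A * M / (S - A) ^ 2) * ca ^ 4
      ∧ (Module.End.HasEigenvalue (Matrix.toLin' 𝒟) l ↔
          (l ^ 2 - 2 * v * l - (ca ^ 2 - v ^ 2))
            * (l ^ 2 - 2 * u * l - (cw ^ 2 + (A * M / (S - A) ^ 2) * ca ^ 2 - u ^ 2))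
          = (A * M / (S - A) ^ 2) * ca ^ 4) := by
  intro l
  have hsub : S - A ≠ 0 := sub_ne_zero.mpr hSA
  have hdet : (l • (1 : Matrix (Fin 4) (Fin 4) ℝ) - 𝒟).det
        = (l ^ 2 - 2 * v * l - (ca ^ 2 - v ^ 2))
            * (l ^ 2 - 2 * u * l - (cw ^ 2 + (A * M / (S - A) ^ 2) * ca ^ 2 - u ^ 2))
          - (A * M / (S - A) ^ 2) * ca ^ 4 := by
    subst h𝒟
    have h1 : A * M / (S - A) ^ 2 = (A / (S - A)) * (M / (S - A)) := by
      rw [div_mul_div_comm, ← sq]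
    have hB : (l • (1 : Matrix (Fin 4) (Fin 4) ℝ) -
        !![0, 1, 0, 0;
           ca ^ 2 - v ^ 2, 2 * v, (M / (S - A)) * ca ^ 2, 0;
           0, 0, 0, 1;
           (A / (S - A)) * ca ^ 2, 0,
             cw ^ 2 + (A * M / (S - A) ^ 2) * ca ^ 2 - u ^ 2, 2 * u])
      = !![l, -1, 0, 0;
           -(ca ^ 2 - v ^ 2), l - 2 * v, -((M / (S - A)) * ca ^ 2), 0;
           0, 0, l, -1;
           -((A / (S - A)) * ca ^ 2), 0,
             -(cw ^ 2 + (A * M / (S - A) ^ 2) * ca ^ 2 - u ^ 2), l - 2 * u] := by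
      ext i j
      fin_cases i <;> fin_cases j <;>
        simp [Matrix.one_apply, Matrix.vecHead, Matrix.vecTail]
    rw [hB]
    simp [Matrix.det_succ_row_zero, Fin.sum_univ_succ, Fin.succAbove]
    rw [h1]; ring
  refine ⟨hdet, ?_⟩
  rw [show Matrix.toLin' 𝒟 = Matrix.toLinAlgEquiv' 𝒟 from rfl,
    Module.End.hasEigenvalue_iff_mem_spectrum, AlgEquiv.spectrum_eq, spectrum.mem_iff]
  constructor
  · intro h
    by_contra hne
    apply h
    rw [Matrix.isUnit_iff_isUnit_det]
    have : ((algebraMap ℝ (Matrix (Fin 4) (Fin 4) ℝ)) l - 𝒟) =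
        l • (1 : Matrix (Fin 4) (Fin 4) ℝ) - 𝒟 := by
      simp [Algebra.algebraMap_eq_smul_one]
    rw [this, hdet]
    exact isUnit_iff_ne_zero.mpr (sub_ne_zero.mpr hne)
  · intro h hu
    rw [Matrix.isUnit_iff_isUnit_det] at hu
    have : ((algebraMap ℝ (Matrix (Fin 4) (Fin 4) ℝ)) l - 𝒟) =
        l • (1 : Matrix (Fin 4) (Fin 4) ℝ) - 𝒟 := by
      simp [Algebra.algebraMap_eq_smul_one]
    rw [this, hdet, sub_eq_zero.mpr h] at hu
    exact (isUnit_iff_ne_zero.mp hu) rfl
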